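/- arXiv:2604.08099 — 6 statements merged into one kernel-verified Lean document; each statement's English description precedes it below -/
import Mathlib

section
/- Let p ≥ 1, let b₁,…,b_p ∈ ℝ³ be such that S := Σᵢ bᵢbᵢᵀ is invertible, let P be a symmetric real 3×3 matrix, let R̃ be a real 3×3 matrix with R̃ᵀR̃ = R̃R̃ᵀ = I, let k > 0, and set P̂ := R̃·P·R̃ᵀ. Define Δ := k·Σᵢ (S⁻¹bᵢ) × (P̂·(I − R̃)·bᵢ) ∈ ℝ³. Then [Δ]× = k·(P·R̃ᵀ − R̃·P). -/
open Matrix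

/-- The skew-symmetric matrix `[x]ₓ` associated with the cross product: `[x]ₓ ⬝ y = x × y`. -/
def skew (x : Fin 3 → ℝ) : Matrix (Fin 3) (Fin 3) ℝ :=
  !![0, -x 2, x 1; x 2, 0, -x 0; -x 1, x 0, 0]

lemma skew_cross (u v : Fin 3 → ℝ) :
    skew (u ⨯₃ v) = vecMulVec v u - vecMulVec u v := by
  ext i j
  fin_cases i <;> fin_cases j <;>
    simp [skew, crossProduct, vecMulVec] <;> ring

lemma skew_smul (c : ℝ) (x : Fin 3 → ℝ) : skew (c • x) = c • skew x := by
  ext i j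
  fin_cases i <;> fin_cases j <;> simp [skew] <;> ring

lemma skew_sum {ι : Type*} (s : Finset ι) (f : ι → Fin 3 → ℝ) :
    skew (∑ i ∈ s, f i) = ∑ i ∈ s, skew (f i) := by
  classical
  induction s using Finset.induction with
  | empty =>
      ext i j; fin_cases i <;> fin_cases j <;>
        simp [skew, vecHead, vecTail]
  | insert _ _ h ih =>
      rw [Finset.sum_insert h, Finset.sum_insert h, ← ih]
      ext i j; fin_cases i <;> fin_cases j <;>
        simp [skew, vecHead, vecTail] <;> ring

lemma vmv_mulVec (M N : Matrix (Fin 3) (Fin 3) ℝ) (u v : Fin 3 → ℝ) :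
    vecMulVec (M *ᵥ u) (N *ᵥ v) = M * vecMulVec u v * Nᵀ := by
  ext i j
  simp [vecMulVec, mul_apply, mulVec, dotProduct, Fin.sum_univ_three]
  ring

theorem stmt1 (p : ℕ) (hp : 1 ≤ p) (b : Fin p → Fin 3 → ℝ)
    (S : Matrix (Fin 3) (Fin 3) ℝ) (hS : S = ∑ i, vecMulVec (b i) (b i))
    (hSinv : IsUnit S)
    (P Rt : Matrix (Fin 3) (Fin 3) ℝ) (hP : Pᵀ = P)
    (hRt1 : Rtᵀ * Rt = 1) (hRt2 : Rt * Rtᵀ = 1)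
    (k : ℝ) (hk : 0 < k)
    (Phat : Matrix (Fin 3) (Fin 3) ℝ) (hPhat : Phat = Rt * P * Rtᵀ)
    (Δ : Fin 3 → ℝ)
    (hΔ : Δ = k • ∑ i, (S⁻¹ *ᵥ b i) ⨯₃ ((Phat * (1 - Rt)) *ᵥ b i)) :
    skew Δ = k • (P * Rtᵀ - Rt * P) := by
  have hSsymm : Sᵀ = S := by
    subst hS
    rw [transpose_sum]
    refine Finset.sum_congr rfl fun i _ => ?_
    ext a c; simp [vecMulVec, mul_comm]
  have hSinvT : (S⁻¹)ᵀ = S⁻¹ := by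
    rw [transpose_nonsing_inv, hSsymm]
  have hdet : IsUnit S.det := (isUnit_iff_isUnit_det S).mp hSinv
  have hSS : S * S⁻¹ = 1 := mul_nonsing_inv S hdet
  have hSS' : S⁻¹ * S = 1 := nonsing_inv_mul S hdet
  set A : Matrix (Fin 3) (Fin 3) ℝ := Phat * (1 - Rt) with hA
  have key : skew Δ = k • (A - Aᵀ) := by
    rw [hΔ, skew_smul, skew_sum]
    congr 1
    have : ∀ i : Fin p, skew ((S⁻¹ *ᵥ b i) ⨯₃ (A *ᵥ b i)) =
        A * vecMulVec (b i) (b i) * (S⁻¹)ᵀ -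
        S⁻¹ * vecMulVec (b i) (b i) * Aᵀ := by
      intro i
      rw [skew_cross, vmv_mulVec, vmv_mulVec]
    simp only [this]
    rw [Finset.sum_sub_distrib, ← Finset.sum_mul, ← Matrix.mul_sum,
      ← Finset.sum_mul, ← Matrix.mul_sum, ← hS, hSinvT,
      Matrix.mul_assoc A, hSS, Matrix.mul_assoc S⁻¹ S, ← Matrix.mul_assoc S⁻¹ S,
      hSS', Matrix.mul_one, Matrix.one_mul]
  rw [key]
  congr 1
  have hAT : Aᵀ = Rt * P * Rtᵀ - P * Rtᵀ := by
    rw [hA, hPhat]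
    simp only [transpose_mul, transpose_sub, transpose_one, hP, transpose_transpose]
    rw [Matrix.sub_mul, Matrix.one_mul, ← Matrix.mul_assoc Rtᵀ Rt,
      hRt1, Matrix.one_mul, ← Matrix.mul_assoc]
  have hA' : A = Rt * P * Rtᵀ - Rt * P := by
    rw [hA, hPhat, Matrix.mul_sub, Matrix.mul_one, Matrix.mul_assoc (Rt * P),
      hRt1, Matrix.mul_one]
  rw [hAT, hA']
  noncomm_ring
end

section
/- Let k > 0, let P : ℝ → Matrix (Fin 3) (Fin 3) ℝ be continuous with P(t) symmetric positive semidefinite for every t, and let R̃ : ℝ → Matrix (Fin 3) (Fin 3) ℝ be differentiable with R̃(t)ᵀ·R̃(t) = I for every t and satisfying the differential equation R̃'(t) = k·(P(t)·R̃(t)ᵀ − R̃(t)·P(t))·R̃(t) for all t. Then the function t ↦ trace(I − R̃(t)) is nonincreasing on ℝ (equivalently, t ↦ trace(R̃(t)) is nondecreasing). -/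
open Matrix

attribute [local instance] Matrix.frobeniusNormedAddCommGroup Matrix.frobeniusNormedSpace

lemma psd_trace_nonneg (A : Matrix (Fin 3) (Fin 3) ℝ) (hA : A.PosSemidef) : 0 ≤ A.trace := by
  rw [Matrix.trace]
  apply Finset.sum_nonneg
  intro i _
  have := hA.dotProduct_mulVec_nonneg (Pi.single i 1)
  simpa [dotProduct, Matrix.mulVec, Pi.single_apply, Finset.sum_ite_eq] using this

lemma key2 (P Q : Matrix (Fin 3) (Fin 3) ℝ) (hP : P.PosSemidef) (hPt : Pᵀ = P)
    (hQO : Qᵀ * Q = 1) : Matrix.trace (P * Q) ≤ Matrix.trace P := by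
  have hpsd : ((1 - Q) * P * (1 - Q)ᵀ).PosSemidef := by
    have := hP.mul_mul_conjTranspose_same (1 - Q)
    rwa [Matrix.conjTranspose_eq_transpose_of_trivial] at this
  have hPQt : Matrix.trace (P * Qᵀ) = Matrix.trace (P * Q) := by
    have h : (P * Qᵀ)ᵀ = Q * P := by rw [Matrix.transpose_mul, Matrix.transpose_transpose, hPt]
    rw [← Matrix.trace_transpose (P * Qᵀ), h, Matrix.trace_mul_comm]
  have hQPQ : Matrix.trace (Q * P * Qᵀ) = Matrix.trace P := by
    rw [Matrix.trace_mul_cycle, hQO, Matrix.one_mul]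
  have e : (1 - Q) * P * (1 - Q)ᵀ = P - P * Qᵀ - Q * P + Q * P * Qᵀ := by
    rw [Matrix.transpose_sub, Matrix.transpose_one]
    noncomm_ring
  have h2 : Matrix.trace ((1 - Q) * P * (1 - Q)ᵀ)
      = 2 * (Matrix.trace P - Matrix.trace (P * Q)) := by
    rw [e, Matrix.trace_add, Matrix.trace_sub, Matrix.trace_sub, hPQt, hQPQ,
      Matrix.trace_mul_comm Q P]
    ring
  have := psd_trace_nonneg _ hpsd
  rw [h2] at this
  linarith

lemma key (P R : Matrix (Fin 3) (Fin 3) ℝ) (hP : P.PosSemidef) (hR : Rᵀ * R = 1) :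
    0 ≤ Matrix.trace ((P * Rᵀ - R * P) * R) := by
  have hPt : Pᵀ = P := by
    have := hP.1
    rwa [Matrix.IsHermitian, Matrix.conjTranspose_eq_transpose_of_trivial] at this
  have hQO : (R * R)ᵀ * (R * R) = 1 := by
    rw [Matrix.transpose_mul]
    calc Rᵀ * Rᵀ * (R * R) = Rᵀ * (Rᵀ * R) * R := by noncomm_ring
    _ = 1 := by rw [hR, Matrix.mul_one, hR]
  have h1 : Matrix.trace ((P * Rᵀ - R * P) * R)
      = Matrix.trace P - Matrix.trace (P * (R * R)) := by
    rw [Matrix.sub_mul, Matrix.trace_sub]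
    congr 1
    · rw [Matrix.mul_assoc, hR, Matrix.mul_one]
    · rw [Matrix.trace_mul_comm, ← Matrix.mul_assoc, Matrix.trace_mul_comm]
  have := key2 P (R * R) hP hPt hQO
  rw [h1]
  linarith

theorem stmt4 (k : ℝ) (hk : 0 < k) (P Rt : ℝ → Matrix (Fin 3) (Fin 3) ℝ)
    (hPc : Continuous P) (hPsd : ∀ t : ℝ, (P t).PosSemidef)
    (hRtO : ∀ t : ℝ, (Rt t)ᵀ * Rt t = 1)
    (hRt : ∀ t : ℝ, HasDerivAt Rt (k • ((P t * (Rt t)ᵀ - Rt t * P t) * Rt t)) t) :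
    Antitone fun t => Matrix.trace ((1 : Matrix (Fin 3) (Fin 3) ℝ) - Rt t) := by
  have hg : ∀ t : ℝ, HasDerivAt (fun s => Matrix.trace ((1 : Matrix (Fin 3) (Fin 3) ℝ) - Rt s))
      (-(k * Matrix.trace ((P t * (Rt t)ᵀ - Rt t * P t) * Rt t))) t := by
    intro t
    have hd : HasDerivAt (fun s => Matrix.trace (Rt s))
        (Matrix.trace (k • ((P t * (Rt t)ᵀ - Rt t * P t) * Rt t))) t :=
      ((Matrix.traceLinearMap (Fin 3) ℝ ℝ).toContinuousLinearMap.hasFDerivAt.comp_hasDerivAt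
        t (hRt t))
    have hd2 : HasDerivAt (fun s => Matrix.trace ((1 : Matrix (Fin 3) (Fin 3) ℝ) - Rt s))
        (0 - Matrix.trace (k • ((P t * (Rt t)ᵀ - Rt t * P t) * Rt t))) t := by
      have := (hasDerivAt_const t
        (Matrix.trace (1 : Matrix (Fin 3) (Fin 3) ℝ))).sub hd
      simpa [Matrix.trace_sub, Pi.sub_def] using this
    simpa [Matrix.trace_smul, smul_eq_mul] using hd2
  apply antitone_of_deriv_nonpos
  · exact fun t => (hg t).differentiableAt
  · intro t
    rw [(hg t).deriv]
    have := key (P t) (Rt t) (hPsd t) (hRtO t)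
    nlinarith
end

section
/- Let v, w ∈ ℝ³ be unit vectors for the Euclidean norm. Then the operator norm (with respect to the Euclidean norm on ℝ³) of the linear map x ↦ (vᵀx)·v − (wᵀx)·w, i.e. of the matrix vvᵀ − wwᵀ, equals √(1 − (vᵀw)²), the sine of the angle between v and w. -/
open Matrix

/-- Euclidean norm of a vector in `ℝ³`. -/
noncomputable def vecEnorm (v : Fin 3 → ℝ) : ℝ := Real.sqrt (v ⬝ᵥ v)

/-- Operator norm of a `3 × 3` real matrix with respect to the Euclidean norm on `ℝ³`. -/
noncomputable def opNorm (A : Matrix (Fin 3) (Fin 3) ℝ) : ℝ :=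
  ‖(Matrix.toEuclideanLin A).toContinuousLinearMap‖

lemma norm_symm_sq (x : Fin 3 → ℝ) :
    ‖(WithLp.equiv 2 (Fin 3 → ℝ)).symm x‖ ^ 2 = x ⬝ᵥ x := by
  rw [EuclideanSpace.norm_eq, Real.sq_sqrt (by positivity)]
  simp only [WithLp.equiv_symm_apply, PiLp.toLp_apply, Real.norm_eq_abs, sq_abs, dotProduct,
    Fin.sum_univ_three]
  ring

lemma Tx_sq (v w x : Fin 3 → ℝ) (hv : v ⬝ᵥ v = 1) (hw : w ⬝ᵥ w = 1) :
    ‖(Matrix.toEuclideanLin (vecMulVec v v - vecMulVec w w)).toContinuousLinearMap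
        ((WithLp.equiv 2 (Fin 3 → ℝ)).symm x)‖ ^ 2
      = (v ⬝ᵥ x)^2 + (w ⬝ᵥ x)^2 - 2 * (v ⬝ᵥ w) * (v ⬝ᵥ x) * (w ⬝ᵥ x) := by
  rw [LinearMap.coe_toContinuousLinearMap', Matrix.toEuclideanLin_apply]
  rw [EuclideanSpace.norm_eq]
  rw [Real.sq_sqrt (by positivity)]
  simp only [dotProduct, Fin.sum_univ_three, Matrix.mulVec, Matrix.sub_apply,
    vecMulVec_apply, WithLp.equiv_symm_apply, PiLp.toLp_apply, WithLp.ofLp_toLp,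
    Real.norm_eq_abs, sq_abs] at *
  linear_combination (v 0 * x 0 + v 1 * x 1 + v 2 * x 2)^2 * hv
    + (w 0 * x 0 + w 1 * x 1 + w 2 * x 2)^2 * hw

set_option maxHeartbeats 2000000 in
set_option maxRecDepth 100000 in
lemma scalar_ineq (v0 v1 v2 w0 w1 w2 x0 x1 x2 : ℝ)
    (hv : v0*v0 + v1*v1 + v2*v2 = 1) (hw : w0*w0 + w1*w1 + w2*w2 = 1)
    (hc : (v0*w0 + v1*w1 + v2*w2) ^ 2 < 1) :
    (v0*x0 + v1*x1 + v2*x2)^2 + (w0*x0 + w1*x1 + w2*x2)^2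
      - 2 * (v0*w0 + v1*w1 + v2*w2) * (v0*x0 + v1*x1 + v2*x2) * (w0*x0 + w1*x1 + w2*x2)
      ≤ (1 - (v0*w0 + v1*w1 + v2*w2) ^ 2) * (x0*x0 + x1*x1 + x2*x2) := by
  obtain ⟨c, hcdef⟩ : ∃ c, v0*w0 + v1*w1 + v2*w2 = c := ⟨_, rfl⟩
  obtain ⟨a, hadef⟩ : ∃ a, v0*x0 + v1*x1 + v2*x2 = a := ⟨_, rfl⟩
  obtain ⟨b, hbdef⟩ : ∃ b, w0*x0 + w1*x1 + w2*x2 = b := ⟨_, rfl⟩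
  rw [hcdef] at hc
  rw [hcdef, hadef, hbdef]
  have h1c : 0 < 1 - c ^ 2 := by linarith
  have key : (1 - c^2) * ((1 - c^2) * (x0*x0 + x1*x1 + x2*x2) - (a^2 + b^2 - 2*c*a*b))
      = ((1 - c^2) * x0 - (a - c*b) * v0 - (b - c*a) * w0)^2
      + ((1 - c^2) * x1 - (a - c*b) * v1 - (b - c*a) * w1)^2
      + ((1 - c^2) * x2 - (a - c*b) * v2 - (b - c*a) * w2)^2
      - (a - c*b)^2 * ((v0*v0 + v1*v1 + v2*v2) - 1)
      - (b - c*a)^2 * ((w0*w0 + w1*w1 + w2*w2) - 1)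
      - 2 * (a - c*b) * (b - c*a) * ((v0*w0 + v1*w1 + v2*w2) - c)
      := by
    rw [← hcdef, ← hadef, ← hbdef]
    ring
  rw [hv, hw, hcdef] at key
  nlinarith [sq_nonneg ((1 - c^2) * x0 - (a - c*b) * v0 - (b - c*a) * w0),
    sq_nonneg ((1 - c^2) * x1 - (a - c*b) * v1 - (b - c*a) * w1),
    sq_nonneg ((1 - c^2) * x2 - (a - c*b) * v2 - (b - c*a) * w2)]

set_option maxHeartbeats 1000000 in
theorem stmt8 (v w : Fin 3 → ℝ) (hv : vecEnorm v = 1) (hw : vecEnorm w = 1) :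
    opNorm (vecMulVec v v - vecMulVec w w) = Real.sqrt (1 - (v ⬝ᵥ w) ^ 2) := by
  rw [vecEnorm, Real.sqrt_eq_one] at hv hw
  set c := v ⬝ᵥ w with hcdef
  have hv3 : v 0 * v 0 + v 1 * v 1 + v 2 * v 2 = 1 := by
    simpa [dotProduct, Fin.sum_univ_three] using hv
  have hw3 : w 0 * w 0 + w 1 * w 1 + w 2 * w 2 = 1 := by
    simpa [dotProduct, Fin.sum_univ_three] using hw
  have hc2 : c ^ 2 ≤ 1 := by
    simp only [hcdef, dotProduct, Fin.sum_univ_three]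
    nlinarith [sq_nonneg (v 0 * w 1 - v 1 * w 0), sq_nonneg (v 0 * w 2 - v 2 * w 0),
      sq_nonneg (v 1 * w 2 - v 2 * w 1)]
  rcases eq_or_lt_of_le hc2 with heq | hlt
  · -- c² = 1 : v = ±w, the matrix is zero
    have hvw : v = w ∨ v = -w := by
      set V : EuclideanSpace ℝ (Fin 3) := (WithLp.equiv 2 (Fin 3 → ℝ)).symm v with hV
      set W : EuclideanSpace ℝ (Fin 3) := (WithLp.equiv 2 (Fin 3 → ℝ)).symm w with hW
      have hnV : ‖V‖ = 1 := by
        have h := norm_symm_sq v; rw [hv, ← hV] at h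
        nlinarith [norm_nonneg V]
      have hnW : ‖W‖ = 1 := by
        have h := norm_symm_sq w; rw [hw, ← hW] at h
        nlinarith [norm_nonneg W]
      have hinner : (inner ℝ V W : ℝ) = c := by
        simp only [hV, hW, PiLp.inner_apply, RCLike.inner_apply, starRingEnd_apply,
          star_trivial, WithLp.equiv_symm_apply, PiLp.toLp_apply, Fin.sum_univ_three, hcdef, dotProduct]
        ring
      have hc1 : c = 1 ∨ c = -1 := by
        have h0 : (c - 1) * (c + 1) = 0 := by nlinarith
        rcases mul_eq_zero.mp h0 with h | h
        · left; linarith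
        · right; linarith
      rcases hc1 with h1 | h1
      · left
        have hVW : V = W := (inner_eq_one_iff_of_norm_eq_one hnV hnW).mp (by rw [hinner, h1])
        have := congrArg (WithLp.equiv 2 (Fin 3 → ℝ)) hVW
        simpa [hV, hW] using this
      · right
        have hnW' : ‖-W‖ = 1 := by rwa [norm_neg]
        have hinner' : (inner ℝ V (-W) : ℝ) = 1 := by
          rw [inner_neg_right, hinner, h1]; norm_num
        have hVW : V = -W := (inner_eq_one_iff_of_norm_eq_one hnV hnW').mp hinner'
        have := congrArg (WithLp.equiv 2 (Fin 3 → ℝ)) hVW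
        simpa [hV, hW] using this
    have hA : vecMulVec v v - vecMulVec w w = 0 := by
      rcases hvw with h | h
      · rw [h, sub_self]
      · rw [h]
        ext i j
        simp [vecMulVec_apply]
    rw [hA, heq, sub_self, Real.sqrt_zero]
    simp [opNorm]
  · -- c² < 1
    have hc3 : (v 0 * w 0 + v 1 * w 1 + v 2 * w 2) ^ 2 < 1 := by
      have : c = v 0 * w 0 + v 1 * w 1 + v 2 * w 2 := by
        simp [hcdef, dotProduct, Fin.sum_univ_three]
      rwa [this] at hlt
    set M := Real.sqrt (1 - c ^ 2) with hM
    have hMnn : 0 ≤ M := Real.sqrt_nonneg _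
    have hMsq : M ^ 2 = 1 - c ^ 2 := Real.sq_sqrt (by linarith)
    rw [opNorm]
    apply ContinuousLinearMap.opNorm_eq_of_bounds hMnn
    · intro X
      obtain ⟨x, hx⟩ : ∃ x : Fin 3 → ℝ, (WithLp.equiv 2 (Fin 3 → ℝ)).symm x = X :=
        ⟨WithLp.equiv 2 (Fin 3 → ℝ) X, by simp⟩
      have h1 := Tx_sq v w x hv hw
      have h2 := norm_symm_sq x
      rw [hx] at h1 h2
      have hbd : ‖(Matrix.toEuclideanLin (vecMulVec v v - vecMulVec w w)).toContinuousLinearMap X‖ ^ 2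
          ≤ (M * ‖X‖) ^ 2 := by
        rw [h1, mul_pow, hMsq, h2]
        have := scalar_ineq (v 0) (v 1) (v 2) (w 0) (w 1) (w 2) (x 0) (x 1) (x 2) hv3 hw3 hc3
        simpa [hcdef, dotProduct, Fin.sum_univ_three] using this
      have hs := Real.sqrt_le_sqrt hbd
      rwa [Real.sqrt_sq (norm_nonneg _), Real.sqrt_sq (by positivity)] at hs
    · intro N hN hbound
      have hc1 : c < 1 := by nlinarith
      obtain ⟨X₀, hX₀⟩ : ∃ X₀ : EuclideanSpace ℝ (Fin 3),
          (WithLp.equiv 2 (Fin 3 → ℝ)).symm (v - w) = X₀ := ⟨_, rfl⟩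
      have ha : v ⬝ᵥ (v - w) = 1 - c := by rw [dotProduct_sub, hv]
      have hb : w ⬝ᵥ (v - w) = c - 1 := by
        rw [dotProduct_sub, hw, dotProduct_comm, ← hcdef]
      have h1 := Tx_sq v w (v - w) hv hw
      rw [ha, hb, ← hcdef, hX₀] at h1
      have h2 : ‖X₀‖ ^ 2 = 2 - 2 * c := by
        rw [← hX₀, norm_symm_sq, dotProduct_sub, sub_dotProduct, sub_dotProduct, hv, hw,
          dotProduct_comm w v, ← hcdef]
        ring
      obtain ⟨t, ht⟩ : ∃ t, ‖(Matrix.toEuclideanLin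
          (vecMulVec v v - vecMulVec w w)).toContinuousLinearMap X₀‖ = t := ⟨_, rfl⟩
      rw [ht] at h1
      have htnn : 0 ≤ t := ht ▸ norm_nonneg _
      have hX₀pos : 0 < ‖X₀‖ := by
        nlinarith [norm_nonneg X₀]
      have hfX₀ : t = M * ‖X₀‖ := by
        have hsq : t ^ 2 = (M * ‖X₀‖) ^ 2 := by
          rw [h1, mul_pow, hMsq, h2]; ring
        nlinarith [mul_nonneg hMnn (norm_nonneg X₀)]
      have hb2 := hbound X₀
      rw [ht, hfX₀] at hb2
      exact le_of_mul_le_mul_right hb2 hX₀pos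
end

section
/- Let R ∈ SO(3) with trace(R) > −1 and let v ∈ ℝ³ be a unit vector. Then |Rv − v|² = 2·(1 − vᵀR²v)/(trace(R) + 1). -/
open Matrix

/-- Euclidean norm of a vector in `ℝ³`. -/
noncomputable def enorm3 (v : Fin 3 → ℝ) : ℝ := Real.sqrt (v ⬝ᵥ v)

lemma adj3 (A : Matrix (Fin 3) (Fin 3) ℝ) :
    adjugate A = A * A - Matrix.trace A • A
      + (((Matrix.trace A) ^ 2 - Matrix.trace (A * A)) / 2) • (1 : Matrix (Fin 3) (Fin 3) ℝ) := by
  rw [Matrix.adjugate_fin_three]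
  ext i j
  fin_cases i <;> fin_cases j <;>
    simp [Matrix.mul_apply, Matrix.trace, Fin.sum_univ_three, Matrix.one_apply] <;> ring

theorem stmt11 (R : Matrix (Fin 3) (Fin 3) ℝ) (hR : Rᵀ * R = 1) (hdet : R.det = 1)
    (htr : Matrix.trace R > -1)
    (v : Fin 3 → ℝ) (hv : enorm3 v = 1) :
    enorm3 (R *ᵥ v - v) ^ 2 = 2 * (1 - v ⬝ᵥ ((R * R) *ᵥ v)) / (Matrix.trace R + 1) := by
  set t := Matrix.trace R with ht
  have hvv : v ⬝ᵥ v = 1 := by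
    have h0 : (0:ℝ) ≤ v ⬝ᵥ v := Finset.sum_nonneg fun i _ => mul_self_nonneg _
    have := hv
    rw [enorm3, Real.sqrt_eq_one] at this
    exact this
  have hR' : R * Rᵀ = 1 := mul_eq_one_comm.mp hR
  have hadj : adjugate R = Rᵀ := by
    have h1 : R * adjugate R = 1 := by rw [Matrix.mul_adjugate, hdet, one_smul]
    calc adjugate R = (Rᵀ * R) * adjugate R := by rw [hR, one_mul]
      _ = Rᵀ * (R * adjugate R) := by rw [mul_assoc]
      _ = Rᵀ := by rw [h1, mul_one]
  have hA := adj3 R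
  rw [hadj] at hA
  set s : ℝ := (t ^ 2 - Matrix.trace (R * R)) / 2 with hs
  -- take trace of both sides to deduce s = t
  have htrA : t = Matrix.trace (R * R) - t * t + 3 * s := by
    have := congrArg Matrix.trace hA
    simpa [Matrix.trace_sub, Matrix.trace_add, Matrix.trace_smul, Matrix.trace_one,
      Matrix.trace_transpose, smul_eq_mul, mul_comm] using this
  have hst : s = t := by
    have h2 : 2 * s = t ^ 2 - Matrix.trace (R * R) := by rw [hs]; ring
    nlinarith [htrA, h2]
  rw [hst] at hA
  have hkey : R * R = t • R - t • (1 : Matrix (Fin 3) (Fin 3) ℝ) + Rᵀ := by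
    rw [hA, ← ht]; abel
  -- scalar consequences
  have hsym : v ⬝ᵥ (Rᵀ *ᵥ v) = v ⬝ᵥ (R *ᵥ v) := by
    rw [Matrix.mulVec_transpose, dotProduct_comm, Matrix.dotProduct_mulVec]
  have hRvRv : (R *ᵥ v) ⬝ᵥ (R *ᵥ v) = 1 := by
    have h1 : (R *ᵥ v) ⬝ᵥ (R *ᵥ v) = v ⬝ᵥ ((Rᵀ * R) *ᵥ v) := by
      rw [← Matrix.mulVec_mulVec]
      rw [Matrix.dotProduct_mulVec (v := v) (w := R *ᵥ v), Matrix.vecMul_transpose]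
    rw [h1, hR, Matrix.one_mulVec, hvv]
  set a : ℝ := v ⬝ᵥ (R *ᵥ v) with ha
  have hquad : v ⬝ᵥ ((R * R) *ᵥ v) = (t + 1) * a - t := by
    rw [hkey]
    simp only [Matrix.add_mulVec, Matrix.sub_mulVec, Matrix.smul_mulVec,
      Matrix.one_mulVec, dotProduct_add, dotProduct_sub, dotProduct_smul, smul_eq_mul,
      hvv, hsym, ← ha]
    ring
  have hlhs : enorm3 (R *ᵥ v - v) ^ 2 = 2 - 2 * a := by
    have h0 : (0:ℝ) ≤ (R *ᵥ v - v) ⬝ᵥ (R *ᵥ v - v) :=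
      Finset.sum_nonneg fun i _ => mul_self_nonneg _
    rw [enorm3, Real.sq_sqrt h0]
    have hcomm : (R *ᵥ v) ⬝ᵥ v = a := by rw [dotProduct_comm, ← ha]
    simp only [sub_dotProduct, dotProduct_sub, hRvRv, hvv, hcomm, ← ha]
    ring
  have htne : t + 1 ≠ 0 := by linarith
  rw [hlhs, hquad]
  field_simp
  ring
end

section
/- Let R, R̂ be real 3×3 orthogonal matrices (RᵀR = R̂ᵀR̂ = I), set R̃ := R̂·Rᵀ, let Π be a symmetric real 3×3 matrix, and let â ∈ ℝ³. Then trace([ (Π·(R̂â − Râ)) × (R̂â) ]× · R̃) = (R̂â − Râ)ᵀ·Π·(R̃²·Râ − Râ). -/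
open Matrix

lemma key_s14 (v a : Fin 3 → ℝ) (M : Matrix (Fin 3) (Fin 3) ℝ) :
    Matrix.trace (skew (v ⨯₃ a) * M) = v ⬝ᵥ (M *ᵥ a - Mᵀ *ᵥ a) := by
  simp [skew, cross_apply, Matrix.trace, Matrix.diag, Matrix.mul_apply, dotProduct,
    mulVec, Matrix.sub_apply, Fin.sum_univ_three, Matrix.transpose_apply]
  ring

theorem stmt14 (R Rhat : Matrix (Fin 3) (Fin 3) ℝ)
    (hR : Rᵀ * R = 1) (hRh : Rhatᵀ * Rhat = 1)
    (Rt : Matrix (Fin 3) (Fin 3) ℝ) (hRt : Rt = Rhat * Rᵀ)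
    (Pr : Matrix (Fin 3) (Fin 3) ℝ) (hPr : Prᵀ = Pr)
    (ahat : Fin 3 → ℝ) :
    Matrix.trace (skew ((Pr *ᵥ (Rhat *ᵥ ahat - R *ᵥ ahat)) ⨯₃ (Rhat *ᵥ ahat)) * Rt)
      = (Rhat *ᵥ ahat - R *ᵥ ahat) ⬝ᵥ (Pr *ᵥ ((Rt * Rt) *ᵥ (R *ᵥ ahat) - R *ᵥ ahat)) := by
  set a := Rhat *ᵥ ahat with ha
  set b := R *ᵥ ahat with hb
  have hRR : R * Rᵀ = 1 := mul_eq_one_comm.mpr hR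
  have hRhRh : Rhat * Rhatᵀ = 1 := mul_eq_one_comm.mpr hRh
  have hba : Rt *ᵥ b = a := by
    rw [hRt, hb, mulVec_mulVec, Matrix.mul_assoc, hR, Matrix.mul_one, ha]
  have hab : Rtᵀ *ᵥ a = b := by
    rw [hRt, Matrix.transpose_mul, Matrix.transpose_transpose, ha, mulVec_mulVec,
      Matrix.mul_assoc, hRh, Matrix.mul_one, hb]
  rw [key_s14]
  have h2 : (Rt * Rt) *ᵥ b = Rt *ᵥ a := by rw [← mulVec_mulVec, hba]
  rw [h2, ← hab]
  rw [show ∀ x : Fin 3 → ℝ, Pr *ᵥ x = x ᵥ* Pr from fun x => by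
      rw [← hPr, Matrix.mulVec_transpose, hPr], ← Matrix.dotProduct_mulVec,
    show ∀ x : Fin 3 → ℝ, Pr *ᵥ x = x ᵥ* Pr from fun x => by
      rw [← hPr, Matrix.mulVec_transpose, hPr]]
end

section
/- Let θ* ∈ (0, π/2) and ε ∈ [0, cos(θ*/2)·cos(θ*)). Let R̃ ∈ SO(3) satisfy trace(R̃) ≥ 1 + 2cos(θ*), and let v, w ∈ ℝ³ be unit vectors such that the operator norm of vvᵀ − wwᵀ (with respect to the Euclidean norm) is at most ε. Then (R̃v − v)ᵀ·(I − wwᵀ)·(R̃²v − v) ≥ (1 − vᵀR̃²v)·(cos(θ*) − ε/cos(θ*/2)); in particular this quantity is nonnegative. -/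
open Matrix Real
set_option maxHeartbeats 1000000

private lemma adj_dot (A : Matrix (Fin 3) (Fin 3) ℝ) (x y : Fin 3 → ℝ) :
    (A *ᵥ x) ⬝ᵥ y = x ⬝ᵥ (Aᵀ *ᵥ y) := by
  simp [dotProduct, mulVec, Fin.sum_univ_three, Matrix.transpose_apply]
  ring

private lemma dot_self_nonneg (x : Fin 3 → ℝ) : 0 ≤ x ⬝ᵥ x := by
  simp only [dotProduct, Fin.sum_univ_three, ← sq]
  positivity

private lemma enorm_nonneg' (x : Fin 3 → ℝ) : 0 ≤ enorm3 x := Real.sqrt_nonneg _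

private lemma enorm_sq (x : Fin 3 → ℝ) : enorm3 x ^ 2 = x ⬝ᵥ x :=
  Real.sq_sqrt (dot_self_nonneg x)

private lemma enorm_eq_norm (z : Fin 3 → ℝ) :
    enorm3 z = ‖(WithLp.equiv 2 (Fin 3 → ℝ)).symm z‖ := by
  rw [EuclideanSpace.norm_eq]
  simp [enorm3, dotProduct, Real.norm_eq_abs, sq_abs]
  ring_nf

private lemma dot_cs (x y : Fin 3 → ℝ) : |x ⬝ᵥ y| ≤ enorm3 x * enorm3 y := by
  have hinner : x ⬝ᵥ y = (inner ℝ ((WithLp.equiv 2 (Fin 3 → ℝ)).symm x)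
      ((WithLp.equiv 2 (Fin 3 → ℝ)).symm y) : ℝ) := by
    simp [dotProduct, PiLp.inner_apply, RCLike.inner_apply]
    exact Finset.sum_congr rfl fun i _ => mul_comm _ _
  rw [enorm_eq_norm, enorm_eq_norm, hinner]
  exact abs_real_inner_le_norm _ _

private lemma mulVec_opNorm (A : Matrix (Fin 3) (Fin 3) ℝ) (x : Fin 3 → ℝ) :
    enorm3 (A *ᵥ x) ≤ opNorm A * enorm3 x := by
  rw [enorm_eq_norm, enorm_eq_norm]
  have := (Matrix.toEuclideanLin A).toContinuousLinearMap.le_opNorm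
    ((WithLp.equiv 2 (Fin 3 → ℝ)).symm x)
  convert this using 2 <;> rfl

private lemma vmv_dot (u v z : Fin 3 → ℝ) :
    u ⬝ᵥ ((vecMulVec v v) *ᵥ z) = (u ⬝ᵥ v) * (v ⬝ᵥ z) := by
  simp [vecMulVec_apply, dotProduct, mulVec, Fin.sum_univ_three]
  ring

private lemma ch3 (A : Matrix (Fin 3) (Fin 3) ℝ) :
    A * A = trace A • A + A.adjugate - trace A.adjugate • (1 : Matrix (Fin 3) (Fin 3) ℝ) := by
  ext i j
  simp only [Matrix.mul_apply, Fin.sum_univ_three, Matrix.adjugate_fin_three,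
    Matrix.trace_fin_three, Matrix.sub_apply, Matrix.add_apply, Matrix.smul_apply,
    Matrix.one_apply, smul_eq_mul, Matrix.of_apply, Matrix.cons_val', Matrix.cons_val_zero,
    Matrix.cons_val_one, Matrix.head_cons, Matrix.empty_val', Matrix.cons_val_fin_one,
    Matrix.head_fin_const]
  fin_cases i <;> fin_cases j <;> simp <;> ring

private lemma hadj' (Rt : Matrix (Fin 3) (Fin 3) ℝ) (hRt : Rtᵀ * Rt = 1) (hdet : Rt.det = 1) :
    Rt.adjugate = Rtᵀ := by
  have := Matrix.mul_adjugate Rt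
  rw [hdet, one_smul] at this
  calc Rt.adjugate = (Rtᵀ * Rt) * Rt.adjugate := by rw [hRt, one_mul]
    _ = Rtᵀ * (Rt * Rt.adjugate) := by rw [Matrix.mul_assoc]
    _ = Rtᵀ := by rw [this, Matrix.mul_one]

private lemma hch' (Rt : Matrix (Fin 3) (Fin 3) ℝ) (hRt : Rtᵀ * Rt = 1) (hdet : Rt.det = 1) :
    Rt * Rt = trace Rt • Rt + Rtᵀ - trace Rt • (1 : Matrix (Fin 3) (Fin 3) ℝ) := by
  have := ch3 Rt
  rw [hadj' Rt hRt hdet, Matrix.trace_transpose] at this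
  exact this

private lemma tr_le_three (Rt : Matrix (Fin 3) (Fin 3) ℝ) (hRt : Rtᵀ * Rt = 1) :
    trace Rt ≤ 3 := by
  have h0 := congrFun (congrFun hRt 0) 0
  have h1 := congrFun (congrFun hRt 1) 1
  have h2 := congrFun (congrFun hRt 2) 2
  simp [Matrix.mul_apply, Fin.sum_univ_three, Matrix.one_apply,
    Matrix.transpose_apply] at h0 h1 h2
  rw [Matrix.trace_fin_three]
  nlinarith [sq_nonneg (Rt 1 0), sq_nonneg (Rt 2 0), sq_nonneg (Rt 0 1), sq_nonneg (Rt 2 1),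
    sq_nonneg (Rt 0 2), sq_nonneg (Rt 1 2), sq_nonneg (Rt 0 0 - 1), sq_nonneg (Rt 1 1 - 1),
    sq_nonneg (Rt 2 2 - 1)]

private lemma quad_ineq (Rt : Matrix (Fin 3) (Fin 3) ℝ) (hRt : Rtᵀ * Rt = 1)
    (hdet : Rt.det = 1) (u : Fin 3 → ℝ) :
    (trace Rt - 1) * (u ⬝ᵥ u) ≤ 2 * (u ⬝ᵥ (Rt *ᵥ u)) := by
  set t := trace Rt with ht
  set x := Rt *ᵥ u with hx
  set y := Rtᵀ *ᵥ u with hy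
  set a := u ⬝ᵥ x with ha
  set n := u ⬝ᵥ u with hn
  have f4b : x ⬝ᵥ u = a := by rw [ha, dotProduct_comm]
  have f4d : u ⬝ᵥ y = a := by
    rw [hy, ← adj_dot, ← hx, f4b]
  have f4c : y ⬝ᵥ u = a := by rw [dotProduct_comm, f4d]
  have f1 : x ⬝ᵥ x = n := by
    rw [hx, adj_dot, Matrix.mulVec_mulVec, hRt, Matrix.one_mulVec, hn]
  have f2 : y ⬝ᵥ y = n := by
    have h2 : Rt * Rtᵀ = 1 := mul_eq_one_comm.mp hRt
    rw [hy, adj_dot, Matrix.transpose_transpose, Matrix.mulVec_mulVec, h2,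
      Matrix.one_mulVec, hn]
  have f3 : x ⬝ᵥ y = t * a + a - t * n := by
    rw [hx, adj_dot, hy, Matrix.mulVec_mulVec, ← Matrix.transpose_mul,
      hch' Rt hRt hdet]
    rw [Matrix.transpose_sub, Matrix.transpose_add, Matrix.transpose_smul,
      Matrix.transpose_smul, Matrix.transpose_transpose, Matrix.transpose_one]
    rw [Matrix.sub_mulVec, Matrix.add_mulVec, Matrix.smul_mulVec,
      Matrix.smul_mulVec, Matrix.one_mulVec]
    rw [dotProduct_sub, dotProduct_add, dotProduct_smul,
      dotProduct_smul]
    rw [← hy, ← hx, f4d, ← ha, ← hn]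
    simp [smul_eq_mul, ht]
  have f3' : y ⬝ᵥ x = t * a + a - t * n := by rw [dotProduct_comm, f3]
  set m := x + y - (t - 1) • u with hm
  have hmm : m ⬝ᵥ m = (3 - t) * (2 * a - (t - 1) * n) := by
    rw [hm]
    simp only [dotProduct_add, add_dotProduct, dotProduct_sub,
      sub_dotProduct, dotProduct_smul, smul_dotProduct, smul_eq_mul]
    rw [f1, f2, f3, f3', f4b, f4c, f4d, ← ha, ← hn]
    ring
  have hmnn := dot_self_nonneg m
  have ht3 := tr_le_three Rt hRt
  rcases lt_or_eq_of_le ht3 with h | h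
  · nlinarith [hmm]
  · have hz : m ⬝ᵥ m = 0 := by rw [hmm, ← h]; ring
    have hum : u ⬝ᵥ m = 2 * a - (t - 1) * n := by
      rw [hm]
      simp only [dotProduct_add, dotProduct_sub, dotProduct_smul,
        smul_eq_mul]
      rw [← ha, f4d, ← hn]; ring
    have habs : |u ⬝ᵥ m| ≤ enorm3 u * enorm3 m := dot_cs u m
    have hem : enorm3 m = 0 := by rw [enorm3, hz, Real.sqrt_zero]
    rw [hem, mul_zero] at habs
    have : u ⬝ᵥ m = 0 := abs_eq_zero.mp (le_antisymm habs (abs_nonneg _))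
    rw [hum] at this
    linarith

theorem stmt15 (θs ε : ℝ) (hθ : θs ∈ Set.Ioo 0 (π / 2))
    (hε : ε ∈ Set.Ico 0 (Real.cos (θs / 2) * Real.cos θs))
    (Rt : Matrix (Fin 3) (Fin 3) ℝ) (hRt : Rtᵀ * Rt = 1) (hdet : Rt.det = 1)
    (htr : Matrix.trace Rt ≥ 1 + 2 * Real.cos θs)
    (v w : Fin 3 → ℝ) (hv : enorm3 v = 1) (hw : enorm3 w = 1)
    (hvw : opNorm (vecMulVec v v - vecMulVec w w) ≤ ε) :
    (Rt *ᵥ v - v) ⬝ᵥ (((1 : Matrix (Fin 3) (Fin 3) ℝ) - vecMulVec w w) *ᵥ ((Rt * Rt) *ᵥ v - v))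
        ≥ (1 - v ⬝ᵥ ((Rt * Rt) *ᵥ v)) * (Real.cos θs - ε / Real.cos (θs / 2))
      ∧ 0 ≤ (Rt *ᵥ v - v) ⬝ᵥ
          (((1 : Matrix (Fin 3) (Fin 3) ℝ) - vecMulVec w w) *ᵥ ((Rt * Rt) *ᵥ v - v)) := by
  obtain ⟨hθ0, hθ1⟩ := hθ
  obtain ⟨hε0, hε1⟩ := hε
  have hπ := Real.pi_pos
  set κ := Real.cos (θs / 2) with hκdef
  have hκpos : 0 < κ := Real.cos_pos_of_mem_Ioo ⟨by linarith, by linarith⟩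
  have hcspos : 0 < Real.cos θs := Real.cos_pos_of_mem_Ioo ⟨by linarith, by linarith⟩
  have hκsq : 4 * κ ^ 2 = 2 + 2 * Real.cos θs := by
    have h := Real.cos_sq (θs / 2)
    have h2 : 2 * (θs / 2) = θs := by ring
    rw [h2] at h
    rw [hκdef]; linarith [h]
  have hvv : v ⬝ᵥ v = 1 := by
    have h : Real.sqrt (v ⬝ᵥ v) = 1 := hv
    nlinarith [Real.sq_sqrt (dot_self_nonneg v), h]
  set u := Rt *ᵥ v - v with hu
  set z := (Rt * Rt) *ᵥ v - v with hz
  set c1 := v ⬝ᵥ (Rt *ᵥ v) with hc1def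
  set c2 := v ⬝ᵥ ((Rt * Rt) *ᵥ v) with hc2def
  have H1 : ∀ x y : Fin 3 → ℝ, (Rt *ᵥ x) ⬝ᵥ (Rt *ᵥ y) = x ⬝ᵥ y := by
    intro x y
    rw [adj_dot, Matrix.mulVec_mulVec, hRt, Matrix.one_mulVec]
  have hsqv : (Rt * Rt) *ᵥ v = Rt *ᵥ (Rt *ᵥ v) := (Matrix.mulVec_mulVec v Rt Rt).symm
  have hRvv : (Rt *ᵥ v) ⬝ᵥ v = c1 := by rw [dotProduct_comm, hc1def]
  have hRvRRv : (Rt *ᵥ v) ⬝ᵥ ((Rt * Rt) *ᵥ v) = c1 := by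
    rw [hsqv, H1, hc1def]
  have hRRvRRv : ((Rt * Rt) *ᵥ v) ⬝ᵥ ((Rt * Rt) *ᵥ v) = 1 := by
    rw [hsqv, H1, H1, hvv]
  have hRRvv : ((Rt * Rt) *ᵥ v) ⬝ᵥ v = c2 := by rw [dotProduct_comm, hc2def]
  have huz : u ⬝ᵥ z = 1 - c2 := by
    rw [hu, hz]
    simp only [dotProduct_sub, sub_dotProduct]
    rw [hRvRRv, hRvv, hc2def, hvv]; ring
  have hvz : v ⬝ᵥ z = c2 - 1 := by
    rw [hz, dotProduct_sub, hc2def, hvv]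
  have huv : u ⬝ᵥ v = c1 - 1 := by
    rw [hu, sub_dotProduct, hRvv, hvv]
  have hzz : z ⬝ᵥ z = 2 - 2 * c2 := by
    rw [hz]
    simp only [dotProduct_sub, sub_dotProduct]
    rw [hRRvRRv, hRRvv, hc2def, hvv]; ring
  have huu : u ⬝ᵥ u = 2 - 2 * c1 := by
    rw [hu]
    simp only [dotProduct_sub, sub_dotProduct]
    rw [H1, hRvv, hc1def, hvv]; ring
  have hc2le : c2 ≤ 1 := by have := dot_self_nonneg z; linarith [hzz]
  have hc1ge : Real.cos θs ≤ c1 := by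
    have hq := quad_ineq Rt hRt hdet v
    rw [hvv] at hq
    have := tr_le_three Rt hRt
    rw [hc1def]; nlinarith [hq, htr]
  have hzu : z = Rt *ᵥ u + u := by
    rw [hu, hz, Matrix.mulVec_sub, hsqv]
    abel
  have hzz_ge : (2 + 2 * Real.cos θs) * (u ⬝ᵥ u) ≤ z ⬝ᵥ z := by
    have hexp : z ⬝ᵥ z = 2 * (u ⬝ᵥ u) + 2 * (u ⬝ᵥ (Rt *ᵥ u)) := by
      rw [hzu]
      simp only [dotProduct_add, add_dotProduct]
      rw [H1, dotProduct_comm (Rt *ᵥ u) u]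
      ring
    have hq := quad_ineq Rt hRt hdet u
    have hun := dot_self_nonneg u
    nlinarith [hq, htr, hexp]
  have hu_le : 2 * κ * enorm3 u ≤ enorm3 z := by
    have h1 : (2 * κ * enorm3 u) ^ 2 ≤ (enorm3 z) ^ 2 := by
      have e1 : (2 * κ * enorm3 u) ^ 2 = 4 * κ ^ 2 * (u ⬝ᵥ u) := by
        rw [mul_pow, enorm_sq]; ring
      have e2 : 4 * κ ^ 2 * (u ⬝ᵥ u) = (2 + 2 * Real.cos θs) * (u ⬝ᵥ u) := by
        rw [hκsq]
      rw [e1, e2, enorm_sq]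
      exact hzz_ge
    have h2 : 0 ≤ 2 * κ * enorm3 u := by
      have := enorm_nonneg' u; nlinarith [hκpos]
    calc 2 * κ * enorm3 u = Real.sqrt ((2 * κ * enorm3 u) ^ 2) := (Real.sqrt_sq h2).symm
      _ ≤ Real.sqrt ((enorm3 z) ^ 2) := Real.sqrt_le_sqrt h1
      _ = enorm3 z := Real.sqrt_sq (enorm_nonneg' z)
  -- split the projector
  have hsplit : ((1 : Matrix (Fin 3) (Fin 3) ℝ) - vecMulVec w w) *ᵥ z
      = ((1 : Matrix (Fin 3) (Fin 3) ℝ) - vecMulVec v v) *ᵥ z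
        + (vecMulVec v v - vecMulVec w w) *ᵥ z := by
    rw [← Matrix.add_mulVec, sub_add_sub_cancel]
  have hterm1 : u ⬝ᵥ (((1 : Matrix (Fin 3) (Fin 3) ℝ) - vecMulVec v v) *ᵥ z)
      = (1 - c2) * c1 := by
    rw [Matrix.sub_mulVec, Matrix.one_mulVec, dotProduct_sub, vmv_dot, huz, huv, hvz]
    ring
  set E := vecMulVec v v - vecMulVec w w with hE
  have hT2 : |u ⬝ᵥ (E *ᵥ z)| ≤ ε / κ * (1 - c2) := by
    have b1 : |u ⬝ᵥ (E *ᵥ z)| ≤ enorm3 u * enorm3 (E *ᵥ z) := dot_cs _ _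
    have b2 : enorm3 (E *ᵥ z) ≤ ε * enorm3 z := by
      calc enorm3 (E *ᵥ z) ≤ opNorm E * enorm3 z := mulVec_opNorm _ _
        _ ≤ ε * enorm3 z := by
            apply mul_le_mul_of_nonneg_right hvw (enorm_nonneg' z)
    have b3 : enorm3 u * enorm3 (E *ᵥ z) ≤ enorm3 u * (ε * enorm3 z) :=
      mul_le_mul_of_nonneg_left b2 (enorm_nonneg' u)
    have b4 : enorm3 u * (ε * enorm3 z) ≤ ε / κ * (1 - c2) := by
      have hzsq : enorm3 z ^ 2 = 2 - 2 * c2 := by rw [enorm_sq, hzz]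
      have hun : 0 ≤ enorm3 u := enorm_nonneg' u
      have hzn : 0 ≤ enorm3 z := enorm_nonneg' z
      have key : enorm3 u * enorm3 z ≤ (enorm3 z) ^ 2 / (2 * κ) := by
        rw [le_div_iff₀ (by linarith : (0:ℝ) < 2 * κ)]
        have hmul : (2 * κ * enorm3 u) * enorm3 z ≤ enorm3 z * enorm3 z :=
          mul_le_mul_of_nonneg_right hu_le hzn
        nlinarith [hmul]
      have : enorm3 u * (ε * enorm3 z) = ε * (enorm3 u * enorm3 z) := by ring
      rw [this]
      calc ε * (enorm3 u * enorm3 z) ≤ ε * ((enorm3 z) ^ 2 / (2 * κ)) :=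
            mul_le_mul_of_nonneg_left key hε0
        _ = ε / κ * (1 - c2) := by rw [hzsq]; field_simp
    linarith [b1, b3, b4]
  have hT2lb : -(ε / κ * (1 - c2)) ≤ u ⬝ᵥ (E *ᵥ z) := by
    have := neg_abs_le (u ⬝ᵥ (E *ᵥ z))
    linarith [hT2]
  have hLHS : u ⬝ᵥ (((1 : Matrix (Fin 3) (Fin 3) ℝ) - vecMulVec w w) *ᵥ z)
      = (1 - c2) * c1 + u ⬝ᵥ (E *ᵥ z) := by
    rw [hsplit, dotProduct_add, hterm1, hE]
  have hmain : u ⬝ᵥ (((1 : Matrix (Fin 3) (Fin 3) ℝ) - vecMulVec w w) *ᵥ z)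
      ≥ (1 - c2) * (Real.cos θs - ε / κ) := by
    rw [hLHS]
    have h1 : (1 - c2) * Real.cos θs ≤ (1 - c2) * c1 :=
      mul_le_mul_of_nonneg_left hc1ge (by linarith)
    have : (1 - c2) * (Real.cos θs - ε / κ) = (1 - c2) * Real.cos θs - (ε / κ * (1 - c2)) := by
      ring
    rw [this]
    linarith [hT2lb, h1]
  have hrhs_nonneg : 0 ≤ (1 - c2) * (Real.cos θs - ε / κ) := by
    apply mul_nonneg (by linarith)
    have : ε / κ < Real.cos θs := (div_lt_iff₀ hκpos).mpr (by linarith [hε1])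
    linarith
  exact ⟨hmain, le_trans hrhs_nonneg hmain⟩
end
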